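/- arXiv:1909.01853 — 2 statements merged into one kernel-verified Lean document; each statement's English description precedes it below -/
import Mathlib

section
/- Constant-free reliability bound (weak-form version of the paper's Theorem on the equilibrated estimator): Let Ω ⊆ ℝ³ be open, let μ : Ω → ℝ be measurable with 0 < μ₀ ≤ μ(x) ≤ μ₁ for almost every x ∈ Ω, and let H, H_h, H̃, j : Ω → ℝ³ be locally integrable vector fields such that both H and H̃ have weak curl j in Ω (i.e. H̃ satisfies the equilibrium condition curl H̃ = j weakly). Suppose e : ℝ³ → ℝ³ is continuously differentiable with compact support contained in Ω, μ·(H − H_h) = curl e almost everywhere in Ω, and ∫_Ω μ|H̃ − H|² dx < ∞. Then ∫_Ω μ|H − H_h|² dx ≤ ∫_Ω μ|H̃ − H_h|² dx, and both integrals are finite. -/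
open MeasureTheory

/-- Partial derivative of a scalar function on ℝ³ in direction `i`. -/
noncomputable def pd3 (f : (Fin 3 → ℝ) → ℝ) (i : Fin 3) (x : Fin 3 → ℝ) : ℝ :=
  fderiv ℝ f x (Pi.single i 1)

/-- The curl of a vector field on ℝ³. -/
noncomputable def curl3 (F : (Fin 3 → ℝ) → (Fin 3 → ℝ)) (x : Fin 3 → ℝ) : Fin 3 → ℝ :=
  ![pd3 (fun y => F y 2) 1 x - pd3 (fun y => F y 1) 2 x,
    pd3 (fun y => F y 0) 2 x - pd3 (fun y => F y 2) 0 x,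
    pd3 (fun y => F y 1) 0 x - pd3 (fun y => F y 0) 1 x]

/-- Euclidean dot product on ℝ³. -/
def dot3 (a b : Fin 3 → ℝ) : ℝ := ∑ i, a i * b i

/-- `G` has weak curl `g` in the open set `Ω`: for every continuously differentiable
vector field `w` with compact support contained in `Ω`, the integrands `G ⬝ curl w` and
`g ⬝ w` are integrable on `Ω` and `∫_Ω G ⬝ curl w = ∫_Ω g ⬝ w`. -/
def HasWeakCurlOn (G g : (Fin 3 → ℝ) → (Fin 3 → ℝ)) (Ω : Set (Fin 3 → ℝ)) : Prop :=
  ∀ w : (Fin 3 → ℝ) → (Fin 3 → ℝ),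
    ContDiff ℝ 1 w → HasCompactSupport w → tsupport w ⊆ Ω →
      IntegrableOn (fun x => dot3 (G x) (curl3 w x)) Ω volume ∧
      IntegrableOn (fun x => dot3 (g x) (w x)) Ω volume ∧
      ∫ x in Ω, dot3 (G x) (curl3 w x) = ∫ x in Ω, dot3 (g x) (w x)

lemma dot3_nonneg (v : Fin 3 → ℝ) : 0 ≤ dot3 v v :=
  Finset.sum_nonneg fun i _ => mul_self_nonneg _

lemma dot3_sub_left (a b c : Fin 3 → ℝ) : dot3 (a - b) c = dot3 a c - dot3 b c := by
  simp [dot3, Fin.sum_univ_three]; ring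

lemma dot3_smul_self (m : ℝ) (v : Fin 3 → ℝ) :
    dot3 (m • v) (m • v) = m ^ 2 * dot3 v v := by
  simp [dot3, Fin.sum_univ_three]; ring

lemma dot3_expand (m : ℝ) (a b c : Fin 3 → ℝ) :
    m * dot3 (a - c) (a - c)
      = m * dot3 (a - b) (a - b) + 2 * dot3 (a - b) (m • (b - c))
        + m * dot3 (b - c) (b - c) := by
  simp [dot3, Fin.sum_univ_three]; ring

lemma curl3_continuous (e : (Fin 3 → ℝ) → (Fin 3 → ℝ)) (he : ContDiff ℝ 1 e) :
    Continuous (curl3 e) := by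
  have hpd : ∀ (k i : Fin 3), Continuous (fun x => pd3 (fun y => e y k) i x) := by
    intro k i
    have hk : ContDiff ℝ 1 (fun y => e y k) :=
      (ContinuousLinearMap.proj k : (Fin 3 → ℝ) →L[ℝ] ℝ).contDiff.comp he
    exact (hk.continuous_fderiv one_ne_zero).clm_apply continuous_const
  refine continuous_pi fun i => ?_
  fin_cases i <;> simp only [curl3] <;>
    [exact ((hpd 2 1).sub (hpd 1 2)).congr (by intro x; simp);
     exact ((hpd 0 2).sub (hpd 2 0)).congr (by intro x; simp);
     exact ((hpd 1 0).sub (hpd 0 1)).congr (by intro x; simp)]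

lemma curl3_hcs (e : (Fin 3 → ℝ) → (Fin 3 → ℝ)) (hesupp : HasCompactSupport e) :
    HasCompactSupport (curl3 e) := by
  apply HasCompactSupport.intro hesupp
  intro x hx
  have hx' : e =ᶠ[nhds x] 0 := notMem_tsupport_iff_eventuallyEq.mp hx
  have hfd : ∀ (k i : Fin 3), pd3 (fun y => e y k) i x = 0 := by
    intro k i
    have hk : (fun y => e y k) =ᶠ[nhds x] (fun _ => (0:ℝ)) :=
      hx'.mono fun y hy => by simp [hy]
    unfold pd3
    rw [hk.fderiv_eq]
    simp
  funext i
  fin_cases i <;> simp [curl3, hfd]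

theorem constant_free_reliability
    (Ω : Set (Fin 3 → ℝ)) (hΩ : IsOpen Ω)
    (μ : (Fin 3 → ℝ) → ℝ) (hμ : Measurable μ)
    (μ₀ μ₁ : ℝ) (hμ₀ : 0 < μ₀)
    (hbound : ∀ᵐ x ∂volume, x ∈ Ω → μ₀ ≤ μ x ∧ μ x ≤ μ₁)
    (H Hh Ht j : (Fin 3 → ℝ) → (Fin 3 → ℝ))
    (hHloc : LocallyIntegrableOn H Ω volume)
    (hHhloc : LocallyIntegrableOn Hh Ω volume)
    (hHtloc : LocallyIntegrableOn Ht Ω volume)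
    (hjloc : LocallyIntegrableOn j Ω volume)
    (hH : HasWeakCurlOn H j Ω) (hHt : HasWeakCurlOn Ht j Ω)
    (e : (Fin 3 → ℝ) → (Fin 3 → ℝ))
    (he : ContDiff ℝ 1 e) (hesupp : HasCompactSupport e) (heΩ : tsupport e ⊆ Ω)
    (hrep : ∀ᵐ x ∂volume, x ∈ Ω → μ x • (H x - Hh x) = curl3 e x)
    (hfin : IntegrableOn (fun x => μ x * dot3 (Ht x - H x) (Ht x - H x)) Ω volume) :
    IntegrableOn (fun x => μ x * dot3 (H x - Hh x) (H x - Hh x)) Ω volume ∧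
    IntegrableOn (fun x => μ x * dot3 (Ht x - Hh x) (Ht x - Hh x)) Ω volume ∧
    ∫ x in Ω, μ x * dot3 (H x - Hh x) (H x - Hh x)
      ≤ ∫ x in Ω, μ x * dot3 (Ht x - Hh x) (Ht x - Hh x) := by
  obtain ⟨hH1, hH2, hH3⟩ := hH e he hesupp heΩ
  obtain ⟨hHt1, hHt2, hHt3⟩ := hHt e he hesupp heΩ
  have hΩm : MeasurableSet Ω := hΩ.measurableSet
  have hbd : ∀ᵐ x ∂volume.restrict Ω, μ₀ ≤ μ x ∧ μ x ≤ μ₁ :=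
    (ae_restrict_iff' hΩm).2 hbound
  have hrp : ∀ᵐ x ∂volume.restrict Ω, μ x • (H x - Hh x) = curl3 e x :=
    (ae_restrict_iff' hΩm).2 hrep
  have hC : Continuous (curl3 e) := curl3_continuous e he
  have hCs : HasCompactSupport (curl3 e) := curl3_hcs e hesupp
  -- integrability of the bound μ₀⁻¹ * |curl e|²
  have hCi : ∀ i : Fin 3, Continuous fun x => curl3 e x i := fun i =>
    (continuous_apply i).comp hC
  have hCdotc : Continuous (fun x => dot3 (curl3 e x) (curl3 e x)) := by
    simp only [dot3, Fin.sum_univ_three]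
    exact (((hCi 0).mul (hCi 0)).add ((hCi 1).mul (hCi 1))).add ((hCi 2).mul (hCi 2))
  have hCdots : HasCompactSupport (fun x => dot3 (curl3 e x) (curl3 e x)) :=
    hCs.comp_left (g := fun v => dot3 v v) (by simp [dot3])
  have hgint : IntegrableOn (fun x => μ₀⁻¹ * dot3 (curl3 e x) (curl3 e x)) Ω volume :=
    (((hCdotc.integrable_of_hasCompactSupport hCdots).const_mul μ₀⁻¹)).integrableOn
  -- measurability of D
  have hHm := hHloc.aestronglyMeasurable
  have hHhm := hHhloc.aestronglyMeasurable
  have hcomp : ∀ i : Fin 3,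
      AEStronglyMeasurable (fun x => H x i - Hh x i) (volume.restrict Ω) := fun i =>
    ((continuous_apply i).comp_aestronglyMeasurable hHm).sub
      ((continuous_apply i).comp_aestronglyMeasurable hHhm)
  have hDm : AEStronglyMeasurable
      (fun x => μ x * dot3 (H x - Hh x) (H x - Hh x)) (volume.restrict Ω) := by
    simp only [dot3, Fin.sum_univ_three, Pi.sub_apply]
    exact hμ.aestronglyMeasurable.mul
      ((((hcomp 0).mul (hcomp 0)).add ((hcomp 1).mul (hcomp 1))).add
        ((hcomp 2).mul (hcomp 2)))
  -- integrability of D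
  have hDint : IntegrableOn (fun x => μ x * dot3 (H x - Hh x) (H x - Hh x)) Ω volume := by
    refine Integrable.mono' hgint hDm ?_
    filter_upwards [hbd, hrp] with x hb hr
    have hd := dot3_nonneg (H x - Hh x)
    have hm : 0 < μ x := lt_of_lt_of_le hμ₀ hb.1
    rw [Real.norm_eq_abs, abs_of_nonneg (mul_nonneg hm.le hd), ← hr, dot3_smul_self]
    have h1 : μ₀ * (μ x * dot3 (H x - Hh x) (H x - Hh x))
        ≤ μ x ^ 2 * dot3 (H x - Hh x) (H x - Hh x) := by
      nlinarith [mul_nonneg (mul_nonneg hm.le (sub_nonneg.2 hb.1)) hd]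
    calc μ x * dot3 (H x - Hh x) (H x - Hh x)
        = μ₀⁻¹ * (μ₀ * (μ x * dot3 (H x - Hh x) (H x - Hh x))) := by
          field_simp
      _ ≤ μ₀⁻¹ * (μ x ^ 2 * dot3 (H x - Hh x) (H x - Hh x)) :=
          mul_le_mul_of_nonneg_left h1 (inv_nonneg.2 hμ₀.le)
  -- the cross term
  have hBeq : (fun x => dot3 (Ht x - H x) (curl3 e x))
      = fun x => dot3 (Ht x) (curl3 e x) - dot3 (H x) (curl3 e x) :=
    funext fun x => dot3_sub_left _ _ _
  have hBint : IntegrableOn (fun x => dot3 (Ht x - H x) (curl3 e x)) Ω volume := by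
    rw [hBeq]; exact hHt1.sub hH1
  have hBzero : ∫ x in Ω, dot3 (Ht x - H x) (curl3 e x) = 0 := by
    rw [hBeq, integral_sub hHt1 hH1, hHt3, hH3, sub_self]
  -- expansion
  have eq1 : (fun x => μ x * dot3 (Ht x - Hh x) (Ht x - Hh x))
      =ᵐ[volume.restrict Ω]
      (fun x => μ x * dot3 (Ht x - H x) (Ht x - H x)
        + 2 * dot3 (Ht x - H x) (curl3 e x)
        + μ x * dot3 (H x - Hh x) (H x - Hh x)) := by
    filter_upwards [hrp] with x hr
    rw [← hr]
    exact dot3_expand (μ x) (Ht x) (H x) (Hh x)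
  have hTint : IntegrableOn (fun x => μ x * dot3 (Ht x - Hh x) (Ht x - Hh x)) Ω volume :=
    ((hfin.add (hBint.const_mul 2)).add hDint).congr eq1.symm
  refine ⟨hDint, hTint, ?_⟩
  have hInt : ∫ x in Ω, μ x * dot3 (Ht x - Hh x) (Ht x - Hh x)
      = (∫ x in Ω, μ x * dot3 (Ht x - H x) (Ht x - H x))
        + 2 * (∫ x in Ω, dot3 (Ht x - H x) (curl3 e x))
        + ∫ x in Ω, μ x * dot3 (H x - Hh x) (H x - Hh x) := by
    have h12 : IntegrableOn (fun x => μ x * dot3 (Ht x - H x) (Ht x - H x)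
        + 2 * dot3 (Ht x - H x) (curl3 e x)) Ω volume := hfin.add (hBint.const_mul 2)
    rw [integral_congr_ae eq1, integral_add h12 hDint,
      integral_add hfin (hBint.const_mul 2), integral_const_mul]
  have hA : 0 ≤ ∫ x in Ω, μ x * dot3 (Ht x - H x) (Ht x - H x) := by
    refine integral_nonneg_of_ae ?_
    filter_upwards [hbd] with x hb
    exact mul_nonneg (le_trans hμ₀.le hb.1) (dot3_nonneg _)
  rw [hInt, hBzero]
  linarith
end

section
/- Well-posedness of the local element equilibration problem on the reference tetrahedron: let k ≥ 1 and let u : ℝ³ → ℝ³ be of Raviart–Thomas form D_k with div u = 0 everywhere on ℝ³. Then there exists exactly one vector field H : ℝ³ → ℝ³ of Nédélec form R_k such that curl H = u everywhere on ℝ³ and ∫_{T̂} H · ∇ψ dx = 0 for every real polynomial ψ of total degree at most k in three variables. -/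
open MeasureTheory

/-- The divergence of a vector field on ℝ³. -/
noncomputable def div3 (F : (Fin 3 → ℝ) → (Fin 3 → ℝ)) (x : Fin 3 → ℝ) : ℝ :=
  ∑ i, pd3 (fun y => F y i) i x

/-- The gradient of a scalar function on ℝ³. -/
noncomputable def grad3 (f : (Fin 3 → ℝ) → ℝ) (x : Fin 3 → ℝ) : Fin 3 → ℝ :=
  fun i => fderiv ℝ f x (Pi.single i 1)

/-- Cross product on ℝ³. -/
def cross3 (a b : Fin 3 → ℝ) : Fin 3 → ℝ :=
  ![a 1 * b 2 - a 2 * b 1, a 2 * b 0 - a 0 * b 2, a 0 * b 1 - a 1 * b 0]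

/-- `f` is (the evaluation of) a real polynomial in three variables of total degree ≤ k. -/
def IsPolyFun3 (k : ℕ) (f : (Fin 3 → ℝ) → ℝ) : Prop :=
  ∃ p : MvPolynomial (Fin 3) ℝ, p.totalDegree ≤ k ∧ ∀ x, f x = MvPolynomial.eval x p

/-- `A` is of Nédélec form `R_k`: `A x = a x + x × b x` with the components of `a, b`
polynomials of total degree at most `k - 1`. -/
def IsNedelec (k : ℕ) (A : (Fin 3 → ℝ) → (Fin 3 → ℝ)) : Prop :=
  ∃ a b : (Fin 3 → ℝ) → (Fin 3 → ℝ),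
    (∀ i, IsPolyFun3 (k - 1) (fun x => a x i)) ∧
    (∀ i, IsPolyFun3 (k - 1) (fun x => b x i)) ∧
    ∀ x, A x = a x + cross3 x (b x)

/-- `u` is of Raviart–Thomas form `D_k`: `u x = v x + (w x) • x` with the components of `v`
and the scalar `w` polynomials of total degree at most `k - 1`. -/
def IsRT (k : ℕ) (u : (Fin 3 → ℝ) → (Fin 3 → ℝ)) : Prop :=
  ∃ (v : (Fin 3 → ℝ) → (Fin 3 → ℝ)) (w : (Fin 3 → ℝ) → ℝ),
    (∀ i, IsPolyFun3 (k - 1) (fun x => v x i)) ∧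
    IsPolyFun3 (k - 1) w ∧
    ∀ x, u x = v x + w x • x

/-- The standard reference tetrahedron in ℝ³. -/
def refTet : Set (Fin 3 → ℝ) := {x | (∀ i, 0 ≤ x i) ∧ ∑ i, x i ≤ 1}



noncomputable section Helpers

open MvPolynomial Finset

abbrev P3 := MvPolynomial (Fin 3) ℝ

lemma deg3 (d : Fin 3 →₀ ℕ) : d.degree = d 0 + d 1 + d 2 := by
  have h : d.degree = ∑ i ∈ d.support, d i := rfl
  rw [h, Finset.sum_subset (Finset.subset_univ _) (fun i _ hi => by
    simpa using Finsupp.notMem_support_iff.mp hi), Fin.sum_univ_three]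

lemma sub_single_apply (s : Fin 3 →₀ ℕ) (i j : Fin 3) :
    ((s - Finsupp.single i 1 : Fin 3 →₀ ℕ)) j = s j - (if i = j then 1 else 0) := by
  rw [Finsupp.tsub_apply, Finsupp.single_apply]

lemma hc_monomial (m : ℕ) (s : Fin 3 →₀ ℕ) (a : ℝ) :
    homogeneousComponent m (monomial s a) = if m = s.degree then monomial s a else 0 :=
  homogeneousComponent_of_mem ((mem_homogeneousSubmodule _ _).mpr
    (isHomogeneous_monomial a rfl))

lemma monomial_mul_X (s : Fin 3 →₀ ℕ) (a : ℝ) (i : Fin 3) :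
    monomial s a * X i = monomial (s + Finsupp.single i 1) a := by
  rw [X, monomial_mul, mul_one]

lemma degree_add_single (s : Fin 3 →₀ ℕ) (i : Fin 3) :
    (s + Finsupp.single i 1).degree = s.degree + 1 := by
  rw [deg3, deg3]
  simp only [Finsupp.add_apply, Finsupp.single_apply]
  fin_cases i <;> simp <;> ring

lemma degree_sub_single (s : Fin 3 →₀ ℕ) (i : Fin 3) (h : s i ≠ 0) :
    (s - Finsupp.single i 1).degree + 1 = s.degree := by
  rw [deg3, deg3]
  simp only [sub_single_apply]
  fin_cases i <;> simp_all <;> omega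

lemma degree_eq_sum (d : Fin 3 →₀ ℕ) : (d.sum fun _ e => e) = d.degree := rfl

lemma hc_pderiv (n : ℕ) (i : Fin 3) (p : P3) :
    homogeneousComponent n (pderiv i p) = pderiv i (homogeneousComponent (n + 1) p) := by
  have key : ∀ s : Fin 3 →₀ ℕ, ∀ a : ℝ,
      homogeneousComponent n (pderiv i (monomial s a)) =
        pderiv i (homogeneousComponent (n + 1) (monomial s a)) := by
    intro s a
    rw [pderiv_monomial, hc_monomial, hc_monomial]
    by_cases hsi : s i = 0
    · rw [show (monomial (s - Finsupp.single i 1)) (a * (s i : ℝ)) = 0 by simp [hsi], ite_self]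
      split_ifs with h
      · rw [pderiv_monomial]
        simp [hsi]
      · simp
    · have hd := degree_sub_single s i hsi
      by_cases h : n + 1 = s.degree
      · rw [if_pos (by omega), if_pos h, pderiv_monomial]
      · rw [if_neg (by omega), if_neg h, map_zero]
  rw [show p = ∑ v ∈ p.support, monomial v (coeff v p) from p.as_sum, map_sum, map_sum,
    map_sum, map_sum]
  exact Finset.sum_congr rfl fun s _ => key s _

lemma hc_mul_X (n : ℕ) (i : Fin 3) (p : P3) :
    homogeneousComponent (n + 1) (p * X i) = homogeneousComponent n p * X i := by
  have key : ∀ s : Fin 3 →₀ ℕ, ∀ a : ℝ,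
      homogeneousComponent (n + 1) (monomial s a * X i) =
        homogeneousComponent n (monomial s a) * X i := by
    intro s a
    rw [monomial_mul_X, hc_monomial, hc_monomial, degree_add_single]
    by_cases h : n = s.degree
    · rw [if_pos (by omega), if_pos h, monomial_mul_X]
    · rw [if_neg (by omega), if_neg h, zero_mul]
  rw [show p = ∑ v ∈ p.support, monomial v (coeff v p) from p.as_sum, Finset.sum_mul,
    map_sum, map_sum, Finset.sum_mul]
  exact Finset.sum_congr rfl fun s _ => key s _

lemma hc_zero_mul_X (i : Fin 3) (p : P3) :
    homogeneousComponent 0 (p * X i) = 0 := by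
  have key : ∀ s : Fin 3 →₀ ℕ, ∀ a : ℝ,
      homogeneousComponent 0 (monomial s a * X i) = 0 := by
    intro s a
    rw [monomial_mul_X, hc_monomial, degree_add_single, if_neg (by omega)]
  rw [show p = ∑ v ∈ p.support, monomial v (coeff v p) from p.as_sum, Finset.sum_mul, map_sum]
  exact Finset.sum_eq_zero fun s _ => key s _

lemma X_mul_pderiv_monomial (i : Fin 3) (s : Fin 3 →₀ ℕ) (a : ℝ) :
    X i * pderiv i (monomial s a) = monomial s (a * (s i : ℝ)) := by
  rw [pderiv_monomial, mul_comm (X i), monomial_mul_X]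
  by_cases hsi : s i = 0
  · simp [hsi]
  · have he : s - Finsupp.single i 1 + Finsupp.single i 1 = s := by
      ext j
      simp only [Finsupp.add_apply, Finsupp.tsub_apply, Finsupp.single_apply]
      split_ifs with h
      · subst h; omega
      · omega
    rw [he]

lemma euler {p : P3} {n : ℕ} (h : p.IsHomogeneous n) :
    X 0 * pderiv 0 p + X 1 * pderiv 1 p + X 2 * pderiv 2 p = C (n : ℝ) * p := by
  have key : ∀ s ∈ p.support,
      X 0 * pderiv 0 (monomial s (coeff s p)) + X 1 * pderiv 1 (monomial s (coeff s p))
        + X 2 * pderiv 2 (monomial s (coeff s p)) = C (n : ℝ) * monomial s (coeff s p) := by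
    intro s hs
    have hdeg : s.degree = n := by
      rw [Finsupp.degree_eq_weight_one]
      exact h (mem_support_iff.mp hs)
    rw [X_mul_pderiv_monomial, X_mul_pderiv_monomial, X_mul_pderiv_monomial,
      ← map_add, ← map_add, C_mul_monomial]
    congr 1
    have h3 := deg3 s
    have h4 : s 0 + s 1 + s 2 = n := by omega
    push_cast [← h4]
    ring
  conv_lhs => rw [show p = ∑ v ∈ p.support, monomial v (coeff v p) from p.as_sum]
  conv_rhs => rw [show p = ∑ v ∈ p.support, monomial v (coeff v p) from p.as_sum]
  rw [map_sum, map_sum, map_sum, Finset.mul_sum, Finset.mul_sum, Finset.mul_sum,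
    Finset.mul_sum, ← Finset.sum_add_distrib, ← Finset.sum_add_distrib]
  exact Finset.sum_congr rfl key

lemma pderiv_pderiv_comm (i j : Fin 3) (p : P3) :
    pderiv i (pderiv j p) = pderiv j (pderiv i p) := by
  by_cases hij : i = j
  · subst hij; rfl
  · have key : ∀ s : Fin 3 →₀ ℕ, ∀ a : ℝ,
        pderiv i (pderiv j (monomial s a)) = pderiv j (pderiv i (monomial s a)) := by
      intro s a
      rw [pderiv_monomial, pderiv_monomial, pderiv_monomial, pderiv_monomial]
      rw [sub_single_apply, sub_single_apply, if_neg hij, if_neg (Ne.symm hij),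
        Nat.sub_zero, Nat.sub_zero]
      have he : s - Finsupp.single j 1 - Finsupp.single i 1
          = s - Finsupp.single i 1 - Finsupp.single j 1 := by
        ext l
        simp only [Finsupp.tsub_apply, Finsupp.single_apply]
        split_ifs <;> omega
      rw [he]
      congr 1
      ring
    rw [show p = ∑ v ∈ p.support, monomial v (coeff v p) from p.as_sum, map_sum, map_sum,
      map_sum, map_sum]
    exact Finset.sum_congr rfl fun s _ => key s _

lemma td_pderiv_le (i : Fin 3) (p : P3) {k : ℕ} (h : p.totalDegree ≤ k) :
    (pderiv i p).totalDegree ≤ k - 1 := by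
  conv_lhs => rw [show p = ∑ v ∈ p.support, monomial v (coeff v p) from p.as_sum, map_sum]
  refine (totalDegree_finset_sum _ _).trans (Finset.sup_le ?_)
  intro s hs
  rw [pderiv_monomial]
  by_cases hsi : s i = 0
  · simp [hsi]
  · refine (totalDegree_monomial_le _ _).trans ?_
    show ((s - Finsupp.single i 1 : Fin 3 →₀ ℕ)).degree ≤ k - 1
    have h1 : s.degree ≤ k := le_trans (le_totalDegree hs) h
    have h2 := degree_sub_single s i hsi
    omega

lemma td_hc_le (m : ℕ) (p : P3) : (homogeneousComponent m p).totalDegree ≤ p.totalDegree := by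
  by_cases h : m ≤ p.totalDegree
  · exact (homogeneousComponent_isHomogeneous m p).totalDegree_le.trans h
  · rw [homogeneousComponent_eq_zero m p (by omega)]
    simp

lemma td_sum_le {ι : Type*} (s : Finset ι) (f : ι → P3) (k : ℕ)
    (h : ∀ i ∈ s, (f i).totalDegree ≤ k) : (∑ i ∈ s, f i).totalDegree ≤ k :=
  (totalDegree_finset_sum s f).trans (Finset.sup_le h)

lemma td_C_mul_le (a : ℝ) (p : P3) : (C a * p).totalDegree ≤ p.totalDegree := by
  rw [C_mul']
  exact totalDegree_smul_le a p

/-- antiderivative operator for the curl construction -/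
def KK (N : ℕ) (p : P3) : P3 :=
  ∑ m ∈ Finset.range N, C ((m : ℝ) + 2)⁻¹ * homogeneousComponent m p

/-- antiderivative operator for the gradient construction -/
def MM (N : ℕ) (p : P3) : P3 :=
  ∑ j ∈ Finset.range N, C ((j : ℝ) + 1)⁻¹ * homogeneousComponent (j + 1) p

lemma td_KK_le (N : ℕ) (p : P3) : (KK N p).totalDegree ≤ p.totalDegree :=
  td_sum_le _ _ _ fun m _ => (td_C_mul_le _ _).trans (td_hc_le m p)

lemma td_MM_le (N : ℕ) (p : P3) : (MM N p).totalDegree ≤ p.totalDegree :=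
  td_sum_le _ _ _ fun m _ => (td_C_mul_le _ _).trans (td_hc_le (m + 1) p)

lemma KK_add (N : ℕ) (p q : P3) : KK N (p + q) = KK N p + KK N q := by
  simp [KK, map_add, mul_add, Finset.sum_add_distrib]

lemma sum_hc (p : P3) (N : ℕ) (h : p.totalDegree < N) :
    ∑ m ∈ Finset.range N, homogeneousComponent m p = p := by
  rw [← Finset.sum_subset (Finset.range_subset_range.mpr (by omega) :
      Finset.range (p.totalDegree + 1) ⊆ Finset.range N)
    (fun m _ hm => homogeneousComponent_eq_zero m p (by
      simp only [Finset.mem_range] at hm; omega))]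
  exact sum_homogeneousComponent p

lemma KK_div_zero (q : Fin 3 → P3) (N : ℕ)
    (hdiv : pderiv 0 (q 0) + pderiv 1 (q 1) + pderiv 2 (q 2) = 0) :
    pderiv 0 (KK N (q 0)) + pderiv 1 (KK N (q 1)) + pderiv 2 (KK N (q 2)) = 0 := by
  unfold KK
  rw [map_sum, map_sum, map_sum, ← Finset.sum_add_distrib, ← Finset.sum_add_distrib]
  refine Finset.sum_eq_zero fun m _ => ?_
  rw [pderiv_C_mul, pderiv_C_mul, pderiv_C_mul, ← mul_add, ← mul_add]
  rcases m with _ | m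
  · simp [pderiv_C]
  · rw [← hc_pderiv, ← hc_pderiv, ← hc_pderiv, ← map_add, ← map_add, hdiv, map_zero, mul_zero]

lemma euler_KK (p : P3) (N : ℕ) (hN : p.totalDegree < N) :
    X 0 * pderiv 0 (KK N p) + X 1 * pderiv 1 (KK N p) + X 2 * pderiv 2 (KK N p)
      + C 2 * KK N p = p := by
  unfold KK
  rw [map_sum, map_sum, map_sum, Finset.mul_sum, Finset.mul_sum, Finset.mul_sum,
    Finset.mul_sum, ← Finset.sum_add_distrib, ← Finset.sum_add_distrib,
    ← Finset.sum_add_distrib]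
  conv_rhs => rw [← sum_hc p N hN]
  refine Finset.sum_congr rfl fun m _ => ?_
  rw [pderiv_C_mul, pderiv_C_mul, pderiv_C_mul]
  have he := euler (homogeneousComponent_isHomogeneous m p)
  have he' : X 0 * pderiv 0 (homogeneousComponent m p)
      + X 1 * pderiv 1 (homogeneousComponent m p)
      + X 2 * pderiv 2 (homogeneousComponent m p)
      = (C ((m : ℝ) + 2) - C 2) * homogeneousComponent m p := by
    rw [he, ← C_sub]
    norm_num
  have hβ : C ((m : ℝ) + 2)⁻¹ * C ((m : ℝ) + 2) = (1 : P3) := by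
    rw [← C_mul, inv_mul_cancel₀ (by positivity), C_1]
  linear_combination (C ((m : ℝ) + 2)⁻¹ : P3) * he' + homogeneousComponent m p * hβ

lemma curl_KK (q : Fin 3 → P3) (N : ℕ) (hN : ∀ i, (q i).totalDegree < N)
    (hdiv : pderiv 0 (q 0) + pderiv 1 (q 1) + pderiv 2 (q 2) = 0) :
    (pderiv 1 (-(X 0 * KK N (q 1) - X 1 * KK N (q 0)))
      - pderiv 2 (-(X 2 * KK N (q 0) - X 0 * KK N (q 2))) = q 0) ∧
    (pderiv 2 (-(X 1 * KK N (q 2) - X 2 * KK N (q 1)))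
      - pderiv 0 (-(X 0 * KK N (q 1) - X 1 * KK N (q 0))) = q 1) ∧
    (pderiv 0 (-(X 2 * KK N (q 0) - X 0 * KK N (q 2)))
      - pderiv 1 (-(X 1 * KK N (q 2) - X 2 * KK N (q 1))) = q 2) := by
  have h2C : (C (2:ℝ) : P3) = 2 := by simp [map_ofNat]
  have hdc := KK_div_zero q N hdiv
  have he0 := euler_KK (q 0) N (hN 0)
  have he1 := euler_KK (q 1) N (hN 1)
  have he2 := euler_KK (q 2) N (hN 2)
  refine ⟨?_, ?_, ?_⟩ <;>
    simp only [map_neg, map_sub, pderiv_mul, pderiv_X_self,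
      pderiv_X_of_ne (show (0 : Fin 3) ≠ 1 by decide),
      pderiv_X_of_ne (show (1 : Fin 3) ≠ 0 by decide),
      pderiv_X_of_ne (show (0 : Fin 3) ≠ 2 by decide),
      pderiv_X_of_ne (show (2 : Fin 3) ≠ 0 by decide),
      pderiv_X_of_ne (show (1 : Fin 3) ≠ 2 by decide),
      pderiv_X_of_ne (show (2 : Fin 3) ≠ 1 by decide),
      one_mul, zero_mul, mul_zero, add_zero, zero_add]
  · linear_combination he0 - X 0 * hdc - KK N (q 0) * h2C
  · linear_combination he1 - X 1 * hdc - KK N (q 1) * h2C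
  · linear_combination he2 - X 2 * hdc - KK N (q 2) * h2C

lemma KK_mul_X (N : ℕ) (p : P3) (i : Fin 3) :
    KK (N + 1) (p * X i) =
      (∑ m ∈ Finset.range N, C (((m + 1 : ℕ) : ℝ) + 2)⁻¹ * homogeneousComponent m p) * X i := by
  unfold KK
  rw [Finset.sum_range_succ', hc_zero_mul_X, mul_zero, add_zero, Finset.sum_mul]
  refine Finset.sum_congr rfl fun m _ => ?_
  rw [hc_mul_X, mul_assoc]

lemma grad_MM (A : Fin 3 → P3) (N : ℕ) (hN : ∀ i, (A i).totalDegree < N)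
    (h01 : pderiv 0 (A 1) = pderiv 1 (A 0))
    (h02 : pderiv 0 (A 2) = pderiv 2 (A 0))
    (h12 : pderiv 1 (A 2) = pderiv 2 (A 1)) :
    (pderiv 0 (MM N (A 0 * X 0 + A 1 * X 1 + A 2 * X 2)) = A 0) ∧
    (pderiv 1 (MM N (A 0 * X 0 + A 1 * X 1 + A 2 * X 2)) = A 1) ∧
    (pderiv 2 (MM N (A 0 * X 0 + A 1 * X 1 + A 2 * X 2)) = A 2) := by
  have hcomm : ∀ (j : ℕ) (i l : Fin 3),
      pderiv i (homogeneousComponent j (A l)) = pderiv l (homogeneousComponent j (A i)) := by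
    intro j i l
    rcases j with _ | j
    · simp [pderiv_C]
    · rw [← hc_pderiv, ← hc_pderiv]
      congr 1
      fin_cases i <;> fin_cases l
      · rfl
      · exact h01
      · exact h02
      · exact h01.symm
      · rfl
      · exact h12
      · exact h02.symm
      · exact h12.symm
      · rfl
  have hβ : ∀ j : ℕ, C ((j : ℝ) + 1)⁻¹ * (C (j : ℝ) + 1) = (1 : P3) := by
    intro j
    rw [show (C (j : ℝ) + 1 : P3) = C ((j : ℝ) + 1) by rw [C_add, C_1], ← C_mul,
      inv_mul_cancel₀ (by positivity), C_1]
  have hsplit : ∀ j : ℕ, homogeneousComponent (j + 1) (A 0 * X 0 + A 1 * X 1 + A 2 * X 2)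
      = homogeneousComponent j (A 0) * X 0 + homogeneousComponent j (A 1) * X 1
        + homogeneousComponent j (A 2) * X 2 := by
    intro j
    rw [map_add, map_add, hc_mul_X, hc_mul_X, hc_mul_X]
  refine ⟨?_, ?_, ?_⟩
  · unfold MM
    rw [map_sum]
    conv_rhs => rw [← sum_hc (A 0) N (hN 0)]
    refine Finset.sum_congr rfl fun j _ => ?_
    rw [pderiv_C_mul, hsplit j, map_add, map_add, pderiv_mul, pderiv_mul, pderiv_mul,
      pderiv_X_self, pderiv_X_of_ne (show (1 : Fin 3) ≠ 0 by decide),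
      pderiv_X_of_ne (show (2 : Fin 3) ≠ 0 by decide), hcomm j 0 1, hcomm j 0 2]
    have he := euler (homogeneousComponent_isHomogeneous j (A 0))
    linear_combination (C ((j : ℝ) + 1)⁻¹ : P3) * he + homogeneousComponent j (A 0) * hβ j
  · unfold MM
    rw [map_sum]
    conv_rhs => rw [← sum_hc (A 1) N (hN 1)]
    refine Finset.sum_congr rfl fun j _ => ?_
    rw [pderiv_C_mul, hsplit j, map_add, map_add, pderiv_mul, pderiv_mul, pderiv_mul,
      pderiv_X_self, pderiv_X_of_ne (show (0 : Fin 3) ≠ 1 by decide),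
      pderiv_X_of_ne (show (2 : Fin 3) ≠ 1 by decide), hcomm j 1 0, hcomm j 1 2]
    have he := euler (homogeneousComponent_isHomogeneous j (A 1))
    linear_combination (C ((j : ℝ) + 1)⁻¹ : P3) * he + homogeneousComponent j (A 1) * hβ j
  · unfold MM
    rw [map_sum]
    conv_rhs => rw [← sum_hc (A 2) N (hN 2)]
    refine Finset.sum_congr rfl fun j _ => ?_
    rw [pderiv_C_mul, hsplit j, map_add, map_add, pderiv_mul, pderiv_mul, pderiv_mul,
      pderiv_X_self, pderiv_X_of_ne (show (0 : Fin 3) ≠ 2 by decide),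
      pderiv_X_of_ne (show (1 : Fin 3) ≠ 2 by decide), hcomm j 2 0, hcomm j 2 1]
    have he := euler (homogeneousComponent_isHomogeneous j (A 2))
    linear_combination (C ((j : ℝ) + 1)⁻¹ : P3) * he + homogeneousComponent j (A 2) * hβ j

end Helpers

section AnalysisHelpers

open MvPolynomial

lemma hasFDerivAt_eval (p : P3) (x : Fin 3 → ℝ) :
    HasFDerivAt (fun y : Fin 3 → ℝ => eval y p)
      (∑ j : Fin 3, eval x (pderiv j p) • (ContinuousLinearMap.proj j : (Fin 3 → ℝ) →L[ℝ] ℝ))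
      x := by
  induction p using MvPolynomial.induction_on with
  | C a =>
      simp only [eval_C, pderiv_C, map_zero, zero_smul, Finset.sum_const_zero]
      exact hasFDerivAt_const a x
  | add p q hp hq =>
      simpa only [map_add, add_smul, Finset.sum_add_distrib] using hp.fun_add hq
  | mul_X p i hp =>
      have hXi : HasFDerivAt (fun y : Fin 3 → ℝ => y i)
          (ContinuousLinearMap.proj i : (Fin 3 → ℝ) →L[ℝ] ℝ) x :=
        (ContinuousLinearMap.proj i : (Fin 3 → ℝ) →L[ℝ] ℝ).hasFDerivAt
      have h := hp.fun_mul hXi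
      have hfun : (fun y : Fin 3 → ℝ => eval y p * y i) = fun y => eval y (p * X i) := by
        funext y; simp
      rw [hfun] at h
      refine h.congr_fderiv ?_
      ext v
      simp only [ContinuousLinearMap.sum_apply, ContinuousLinearMap.smul_apply,
        ContinuousLinearMap.proj_apply, ContinuousLinearMap.add_apply,
        ContinuousLinearMap.coe_smul', Pi.smul_apply, smul_eq_mul,
        pderiv_mul, map_add, map_mul, eval_X, Fin.sum_univ_three]
      fin_cases i <;> simp [Pi.single_apply] <;> ring

lemma pd3_eval (p : P3) (i : Fin 3) (x : Fin 3 → ℝ) :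
    pd3 (fun y => eval y p) i x = eval x (pderiv i p) := by
  unfold pd3
  rw [(hasFDerivAt_eval p x).fderiv]
  simp only [ContinuousLinearMap.sum_apply, ContinuousLinearMap.smul_apply,
    ContinuousLinearMap.proj_apply, smul_eq_mul, Fin.sum_univ_three]
  fin_cases i <;> simp [Pi.single_apply]

lemma continuous_eval3 (p : P3) : Continuous fun y : Fin 3 → ℝ => eval y p :=
  continuous_iff_continuousAt.mpr fun x => (hasFDerivAt_eval p x).differentiableAt.continuousAt

lemma exists_line_poly (p : P3) (c v : Fin 3 → ℝ) :
    ∃ q : Polynomial ℝ, ∀ t : ℝ, eval (fun i => c i + t * v i) p = q.eval t := by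
  induction p using MvPolynomial.induction_on with
  | C a => exact ⟨Polynomial.C a, fun t => by simp⟩
  | add p q hp hq =>
      obtain ⟨qp, hqp⟩ := hp
      obtain ⟨qq, hqq⟩ := hq
      exact ⟨qp + qq, fun t => by simp [hqp t, hqq t]⟩
  | mul_X p i hp =>
      obtain ⟨qp, hqp⟩ := hp
      refine ⟨qp * (Polynomial.C (v i) * Polynomial.X + Polynomial.C (c i)), fun t => ?_⟩
      simp only [map_mul, eval_X, Polynomial.eval_mul, Polynomial.eval_add,
        Polynomial.eval_C, Polynomial.eval_X, hqp t]
      ring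

lemma poly_eq_zero_of_ball {p : P3} {c : Fin 3 → ℝ} {r : ℝ} (hr : 0 < r)
    (h : ∀ x ∈ Metric.ball c r, eval x p = 0) : p = 0 := by
  have hall : ∀ x : Fin 3 → ℝ, eval x p = 0 := by
    intro x
    obtain ⟨q, hq⟩ := exists_line_poly p c (fun i => x i - c i)
    set B : ℝ := 1 + ∑ i : Fin 3, |x i - c i| with hB
    have hBpos : 0 < B := by positivity
    have habs : ∀ i, |x i - c i| ≤ B := by
      intro i
      have h1 : |x i - c i| ≤ ∑ j : Fin 3, |x j - c j| :=
        Finset.single_le_sum (f := fun j => |x j - c j|) (fun j _ => abs_nonneg _)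
          (Finset.mem_univ i)
      rw [hB]; linarith
    have hroot : ∀ t : ℝ, |t| < r / B → q.eval t = 0 := by
      intro t ht
      rw [← hq t]
      apply h
      rw [Metric.mem_ball, dist_pi_lt_iff hr]
      intro i
      rw [Real.dist_eq]
      have habs2 : |c i + t * (x i - c i) - c i| = |t| * |x i - c i| := by
        rw [add_sub_cancel_left, abs_mul]
      rw [habs2]
      calc |t| * |x i - c i| ≤ |t| * B :=
            mul_le_mul_of_nonneg_left (habs i) (abs_nonneg t)
        _ < r := (lt_div_iff₀ hBpos).mp ht
    have hq0 : q = 0 := by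
      apply Polynomial.eq_zero_of_infinite_isRoot
      refine Set.Infinite.mono (fun t ht => ?_) (Set.Ioo_infinite (by positivity : (0:ℝ) < r / B))
      exact hroot t (by rw [abs_of_pos ht.1]; exact ht.2)
    have h1 := hq 1
    rw [hq0] at h1
    have hfun : (fun i => c i + 1 * (x i - c i)) = x := by funext i; ring
    rw [hfun] at h1
    simpa using h1
  exact MvPolynomial.funext fun x => by rw [hall x, map_zero]

lemma isClosed_refTet : IsClosed refTet := by
  have h : refTet = {x : Fin 3 → ℝ | ∀ i, 0 ≤ x i} ∩ {x : Fin 3 → ℝ | ∑ i, x i ≤ 1} := by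
    ext x; simp [refTet, Set.mem_inter_iff]
  rw [h]
  refine IsClosed.inter ?_ ?_
  · rw [Set.setOf_forall]
    exact isClosed_iInter fun i => isClosed_le continuous_const (continuous_apply i)
  · exact isClosed_le (continuous_finset_sum _ fun i _ => continuous_apply i) continuous_const

lemma refTet_subset_Icc : refTet ⊆ Set.Icc (0 : Fin 3 → ℝ) 1 := by
  rintro x ⟨h0, h1⟩
  refine ⟨Pi.le_def.mpr fun i => h0 i, Pi.le_def.mpr fun i => ?_⟩
  have hle : x i ≤ ∑ j, x j := Finset.single_le_sum (fun j _ => h0 j) (Finset.mem_univ i)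
  have : (1 : Fin 3 → ℝ) i = 1 := rfl
  rw [this]
  linarith

lemma isCompact_refTet : IsCompact refTet :=
  IsCompact.of_isClosed_subset isCompact_Icc isClosed_refTet refTet_subset_Icc

lemma measurableSet_refTet : MeasurableSet refTet := isClosed_refTet.measurableSet

noncomputable def tetc : Fin 3 → ℝ := fun _ => 1/8

lemma ball_subset_refTet : Metric.ball tetc (1/8) ⊆ refTet := by
  intro x hx
  rw [Metric.mem_ball, dist_pi_lt_iff (by norm_num : (0:ℝ) < 1/8)] at hx
  have h' : ∀ i, |x i - 1/8| < 1/8 := by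
    intro i
    have h2 := hx i
    rw [Real.dist_eq] at h2
    exact h2
  constructor
  · intro i
    have h3 := abs_lt.mp (h' i)
    linarith [h3.1]
  · rw [Fin.sum_univ_three]
    have h0 := abs_lt.mp (h' 0)
    have h1 := abs_lt.mp (h' 1)
    have h2 := abs_lt.mp (h' 2)
    linarith [h0.2, h1.2, h2.2]

lemma integrableOn_refTet (f : (Fin 3 → ℝ) → ℝ) (hf : Continuous f) :
    IntegrableOn f refTet volume :=
  hf.continuousOn.integrableOn_compact isCompact_refTet

lemma polys_zero_of_integral_zero (g : Fin 3 → P3)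
    (h : (∫ x in refTet, ∑ i, eval x (g i) * eval x (g i)) = 0) : ∀ i, g i = 0 := by
  set f : (Fin 3 → ℝ) → ℝ := fun x => ∑ i, eval x (g i) * eval x (g i) with hfdef
  have hfc : Continuous f :=
    continuous_finset_sum _ fun i _ => (continuous_eval3 _).mul (continuous_eval3 _)
  have hnn : ∀ x, 0 ≤ f x := fun x => Finset.sum_nonneg fun i _ => mul_self_nonneg _
  have hint : IntegrableOn f refTet volume := integrableOn_refTet f hfc
  have hae : f =ᵐ[volume.restrict refTet] 0 :=
    (integral_eq_zero_iff_of_nonneg (fun x => hnn x) hint).mp h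
  have hnull : volume.restrict refTet {x | f x ≠ 0} = 0 := by
    simpa [Filter.EventuallyEq, ae_iff] using hae
  have hball : ∀ x ∈ Metric.ball tetc (1/8 : ℝ), f x = 0 := by
    by_contra hcon
    push_neg at hcon
    obtain ⟨x₀, hx₀b, hx₀⟩ := hcon
    have hpos : 0 < f x₀ := lt_of_le_of_ne (hnn x₀) (Ne.symm hx₀)
    have hopen : IsOpen ({y | 0 < f y} ∩ Metric.ball tetc (1/8)) :=
      (isOpen_lt continuous_const hfc).inter Metric.isOpen_ball
    have hsub : ({y | 0 < f y} ∩ Metric.ball tetc (1/8)) ⊆ {x | f x ≠ 0} ∩ refTet := by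
      rintro y ⟨hy1, hy2⟩
      exact ⟨ne_of_gt hy1, ball_subset_refTet hy2⟩
    have h0 : volume ({y | 0 < f y} ∩ Metric.ball tetc (1/8)) = 0 := by
      refine measure_mono_null hsub ?_
      rw [← Measure.restrict_apply' measurableSet_refTet]
      exact hnull
    have hne : ({y | 0 < f y} ∩ Metric.ball tetc (1/8)).Nonempty := ⟨x₀, hpos, hx₀b⟩
    exact (hopen.measure_pos volume hne).ne' h0
  intro i
  refine poly_eq_zero_of_ball (c := tetc) (show (0:ℝ) < 1/8 by norm_num) (fun x hx => ?_)
  have hfx := hball x hx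
  have hterm : ∀ j ∈ Finset.univ, 0 ≤ eval x (g j) * eval x (g j) :=
    fun j _ => mul_self_nonneg _
  have hz := (Finset.sum_eq_zero_iff_of_nonneg hterm).mp hfx i (Finset.mem_univ i)
  exact mul_self_eq_zero.mp hz

end AnalysisHelpers

section MainSetup

open MvPolynomial

/-- polynomial cross product with the coordinate field X -/
noncomputable def crX (f : Fin 3 → P3) : Fin 3 → P3 :=
  ![X 1 * f 2 - X 2 * f 1, X 2 * f 0 - X 0 * f 2, X 0 * f 1 - X 1 * f 0]

/-- gradient map on polynomials of degree at most k -/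
noncomputable def gradMap (k : ℕ) :
    (restrictTotalDegree (Fin 3) ℝ k) →ₗ[ℝ] (Fin 3 → P3) where
  toFun φ := fun i => pderiv i (φ : P3)
  map_add' φ ψ := by funext i; simp
  map_smul' r φ := by funext i; simp

/-- L² pairing of polynomial vector fields over the reference tetrahedron -/
noncomputable def I2 (g h : Fin 3 → P3) : ℝ :=
  ∫ x in refTet, ∑ i, eval x (g i) * eval x (h i)

lemma I2_cont (g h : Fin 3 → P3) :
    Continuous fun x : Fin 3 → ℝ => ∑ i, eval x (g i) * eval x (h i) :=
  continuous_finset_sum _ fun i _ => (continuous_eval3 _).mul (continuous_eval3 _)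

lemma I2_int (g h : Fin 3 → P3) :
    IntegrableOn (fun x : Fin 3 → ℝ => ∑ i, eval x (g i) * eval x (h i)) refTet volume :=
  integrableOn_refTet _ (I2_cont g h)

lemma I2_add_left (g g' h : Fin 3 → P3) : I2 (g + g') h = I2 g h + I2 g' h := by
  unfold I2
  rw [← integral_add (I2_int g h) (I2_int g' h)]
  congr 1
  funext x
  rw [← Finset.sum_add_distrib]
  refine Finset.sum_congr rfl fun i _ => ?_
  show eval x (g i + g' i) * _ = _
  rw [map_add]
  ring

lemma I2_sub_left (g g' h : Fin 3 → P3) : I2 (g - g') h = I2 g h - I2 g' h := by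
  unfold I2
  rw [← integral_sub (I2_int g h) (I2_int g' h)]
  congr 1
  funext x
  rw [← Finset.sum_sub_distrib]
  refine Finset.sum_congr rfl fun i _ => ?_
  show eval x (g i - g' i) * _ = _
  rw [map_sub]
  ring

lemma I2_smul_left (r : ℝ) (g h : Fin 3 → P3) : I2 (r • g) h = r * I2 g h := by
  unfold I2
  rw [← smul_eq_mul, ← integral_smul]
  congr 1
  funext x
  rw [Finset.smul_sum]
  refine Finset.sum_congr rfl fun i _ => ?_
  show eval x (r • g i) * _ = _
  rw [smul_eq_C_mul, map_mul, eval_C]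
  simp [mul_assoc]

lemma I2_comm (g h : Fin 3 → P3) : I2 g h = I2 h g := by
  unfold I2
  congr 1
  funext x
  exact Finset.sum_congr rfl fun i _ => mul_comm _ _

lemma I2_self_zero {g : Fin 3 → P3} (h : I2 g g = 0) : ∀ i, g i = 0 :=
  polys_zero_of_integral_zero g h

/-- the bilinear form on the space of gradients -/
noncomputable def BF (k : ℕ) :
    LinearMap.BilinForm ℝ ↥(LinearMap.range (gradMap k)) :=
  LinearMap.mk₂ ℝ (fun g h => I2 (g : Fin 3 → P3) (h : Fin 3 → P3))
    (fun g g' h => by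
      show I2 ((g + g' : _) : Fin 3 → P3) _ = _
      rw [Submodule.coe_add, I2_add_left])
    (fun c g h => by
      show I2 ((c • g : _) : Fin 3 → P3) _ = _
      rw [Submodule.coe_smul, I2_smul_left, smul_eq_mul])
    (fun g h h' => by
      show I2 _ ((h + h' : _) : Fin 3 → P3) = _
      rw [Submodule.coe_add, I2_comm, I2_add_left, I2_comm (h : Fin 3 → P3),
        I2_comm (h' : Fin 3 → P3)])
    (fun c g h => by
      show I2 _ ((c • h : _) : Fin 3 → P3) = _
      rw [Submodule.coe_smul, I2_comm, I2_smul_left, smul_eq_mul, I2_comm])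

lemma BF_apply (k : ℕ) (g h : ↥(LinearMap.range (gradMap k))) :
    BF k g h = I2 (g : Fin 3 → P3) (h : Fin 3 → P3) := rfl

lemma BF_nondeg (k : ℕ) : (BF k).Nondegenerate := by
  constructor <;>
  · intro g hg
    have h0 := hg g
    rw [BF_apply] at h0
    have hcomp := I2_self_zero h0
    exact Subtype.ext (funext fun i => by rw [hcomp i]; rfl)

/-- the linear functional to be represented -/
noncomputable def LF (k : ℕ) (P : Fin 3 → P3) :
    Module.Dual ℝ ↥(LinearMap.range (gradMap k)) where
  toFun g := I2 P (g : Fin 3 → P3)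
  map_add' g h := by
    show I2 P ((g + h : _) : Fin 3 → P3) = _
    rw [Submodule.coe_add, I2_comm, I2_add_left, I2_comm (g : Fin 3 → P3),
      I2_comm (h : Fin 3 → P3)]
  map_smul' c g := by
    show I2 P ((c • g : _) : Fin 3 → P3) = _
    rw [Submodule.coe_smul, I2_comm, I2_smul_left, I2_comm]
    rfl

end MainSetup

section Uniqueness

open MvPolynomial

lemma uniqueness_aux (k : ℕ) (hk : 1 ≤ k) (H₁ H₂ : (Fin 3 → ℝ) → (Fin 3 → ℝ))
    (h₁ : IsNedelec k H₁) (h₂ : IsNedelec k H₂)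
    (hc : ∀ x, curl3 H₁ x = curl3 H₂ x)
    (ho₁ : ∀ ψ : MvPolynomial (Fin 3) ℝ, ψ.totalDegree ≤ k →
      ∫ x in refTet, dot3 (H₁ x) (grad3 (fun y => MvPolynomial.eval y ψ) x) = 0)
    (ho₂ : ∀ ψ : MvPolynomial (Fin 3) ℝ, ψ.totalDegree ≤ k →
      ∫ x in refTet, dot3 (H₂ x) (grad3 (fun y => MvPolynomial.eval y ψ) x) = 0) :
    H₁ = H₂ := by
  classical
  obtain ⟨a₁, b₁, ha₁, hb₁, hd₁⟩ := h₁
  obtain ⟨a₂, b₂, ha₂, hb₂, hd₂⟩ := h₂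
  choose aP₁ haP₁ haP₁e using ha₁
  choose bP₁ hbP₁ hbP₁e using hb₁
  choose aP₂ haP₂ haP₂e using ha₂
  choose bP₂ hbP₂ hbP₂e using hb₂
  have haP₁e' : ∀ i x, a₁ x i = eval x (aP₁ i) := fun i x => haP₁e i x
  have hbP₁e' : ∀ i x, b₁ x i = eval x (bP₁ i) := fun i x => hbP₁e i x
  have haP₂e' : ∀ i x, a₂ x i = eval x (aP₂ i) := fun i x => haP₂e i x
  have hbP₂e' : ∀ i x, b₂ x i = eval x (bP₂ i) := fun i x => hbP₂e i x
  set P₁ : Fin 3 → P3 := fun i => aP₁ i + crX bP₁ i with hP₁def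
  set P₂ : Fin 3 → P3 := fun i => aP₂ i + crX bP₂ i with hP₂def
  have hH₁ : ∀ x i, H₁ x i = eval x (P₁ i) := by
    intro x i
    have hx := congrFun (hd₁ x) i
    rw [hx]
    show a₁ x i + cross3 x (b₁ x) i = _
    fin_cases i
    · show a₁ x 0 + (x 1 * b₁ x 2 - x 2 * b₁ x 1)
        = eval x (aP₁ 0 + (X 1 * bP₁ 2 - X 2 * bP₁ 1))
      rw [haP₁e' 0 x, hbP₁e' 1 x, hbP₁e' 2 x]
      simp only [map_add, map_sub, map_mul, eval_X]
    · show a₁ x 1 + (x 2 * b₁ x 0 - x 0 * b₁ x 2)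
        = eval x (aP₁ 1 + (X 2 * bP₁ 0 - X 0 * bP₁ 2))
      rw [haP₁e' 1 x, hbP₁e' 0 x, hbP₁e' 2 x]
      simp only [map_add, map_sub, map_mul, eval_X]
    · show a₁ x 2 + (x 0 * b₁ x 1 - x 1 * b₁ x 0)
        = eval x (aP₁ 2 + (X 0 * bP₁ 1 - X 1 * bP₁ 0))
      rw [haP₁e' 2 x, hbP₁e' 0 x, hbP₁e' 1 x]
      simp only [map_add, map_sub, map_mul, eval_X]
  have hH₂ : ∀ x i, H₂ x i = eval x (P₂ i) := by
    intro x i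
    have hx := congrFun (hd₂ x) i
    rw [hx]
    show a₂ x i + cross3 x (b₂ x) i = _
    fin_cases i
    · show a₂ x 0 + (x 1 * b₂ x 2 - x 2 * b₂ x 1)
        = eval x (aP₂ 0 + (X 1 * bP₂ 2 - X 2 * bP₂ 1))
      rw [haP₂e' 0 x, hbP₂e' 1 x, hbP₂e' 2 x]
      simp only [map_add, map_sub, map_mul, eval_X]
    · show a₂ x 1 + (x 2 * b₂ x 0 - x 0 * b₂ x 2)
        = eval x (aP₂ 1 + (X 2 * bP₂ 0 - X 0 * bP₂ 2))
      rw [haP₂e' 1 x, hbP₂e' 0 x, hbP₂e' 2 x]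
      simp only [map_add, map_sub, map_mul, eval_X]
    · show a₂ x 2 + (x 0 * b₂ x 1 - x 1 * b₂ x 0)
        = eval x (aP₂ 2 + (X 0 * bP₂ 1 - X 1 * bP₂ 0))
      rw [haP₂e' 2 x, hbP₂e' 0 x, hbP₂e' 1 x]
      simp only [map_add, map_sub, map_mul, eval_X]
  set A : Fin 3 → P3 := P₁ - P₂ with hAdef
  have e₁ : ∀ l : Fin 3, (fun y => H₁ y l) = fun y => eval y (P₁ l) :=
    fun l => funext fun y => hH₁ y l
  have e₂ : ∀ l : Fin 3, (fun y => H₂ y l) = fun y => eval y (P₂ l) :=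
    fun l => funext fun y => hH₂ y l
  -- curl-free identities for A
  have hcf : ∀ (i j : Fin 3), pderiv i (P₁ j) - pderiv j (P₁ i)
      = pderiv i (P₂ j) - pderiv j (P₂ i) → True := fun _ _ _ => trivial
  have hcurlcomp : ∀ (i j : Fin 3),
      (∀ x : Fin 3 → ℝ, pd3 (fun y => H₁ y j) i x - pd3 (fun y => H₁ y i) j x
        = pd3 (fun y => H₂ y j) i x - pd3 (fun y => H₂ y i) j x) →
      pderiv i (A j) = pderiv j (A i) := by
    intro i j hx
    have hpoly : ∀ x : Fin 3 → ℝ,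
        eval x (pderiv i (P₁ j) - pderiv j (P₁ i)) = eval x (pderiv i (P₂ j) - pderiv j (P₂ i)) := by
      intro x
      have h := hx x
      rw [e₁ j, e₁ i, e₂ j, e₂ i, pd3_eval, pd3_eval, pd3_eval, pd3_eval] at h
      rw [map_sub, map_sub]
      exact h
    have hpp := MvPolynomial.funext hpoly
    have hAj : A j = P₁ j - P₂ j := rfl
    have hAi : A i = P₁ i - P₂ i := rfl
    rw [hAj, hAi, map_sub, map_sub]
    linear_combination hpp
  have hc0 : ∀ x : Fin 3 → ℝ, pd3 (fun y => H₁ y 2) 1 x - pd3 (fun y => H₁ y 1) 2 x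
      = pd3 (fun y => H₂ y 2) 1 x - pd3 (fun y => H₂ y 1) 2 x :=
    fun x => congrFun (hc x) 0
  have hc1 : ∀ x : Fin 3 → ℝ, pd3 (fun y => H₁ y 0) 2 x - pd3 (fun y => H₁ y 2) 0 x
      = pd3 (fun y => H₂ y 0) 2 x - pd3 (fun y => H₂ y 2) 0 x :=
    fun x => congrFun (hc x) 1
  have hc2 : ∀ x : Fin 3 → ℝ, pd3 (fun y => H₁ y 1) 0 x - pd3 (fun y => H₁ y 0) 1 x
      = pd3 (fun y => H₂ y 1) 0 x - pd3 (fun y => H₂ y 0) 1 x :=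
    fun x => congrFun (hc x) 2
  have h12 : pderiv 1 (A 2) = pderiv 2 (A 1) := hcurlcomp 1 2 hc0
  have h02 : pderiv 0 (A 2) = pderiv 2 (A 0) := by
    have := hcurlcomp 2 0 hc1
    exact this.symm
  have h01 : pderiv 0 (A 1) = pderiv 1 (A 0) := hcurlcomp 0 1 hc2
  -- the potential
  set N₂ : ℕ := Nat.max (Nat.max ((A 0).totalDegree) ((A 1).totalDegree)) ((A 2).totalDegree)
    + 1 with hN₂def
  have hN₂ : ∀ i, (A i).totalDegree < N₂ := by
    have hm1 : (A 0).totalDegree ≤ Nat.max ((A 0).totalDegree) ((A 1).totalDegree) :=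
      Nat.le_max_left _ _
    have hm2 : (A 1).totalDegree ≤ Nat.max ((A 0).totalDegree) ((A 1).totalDegree) :=
      Nat.le_max_right _ _
    have hm3 : Nat.max ((A 0).totalDegree) ((A 1).totalDegree)
        ≤ Nat.max (Nat.max ((A 0).totalDegree) ((A 1).totalDegree)) ((A 2).totalDegree) :=
      Nat.le_max_left _ _
    have hm4 : (A 2).totalDegree
        ≤ Nat.max (Nat.max ((A 0).totalDegree) ((A 1).totalDegree)) ((A 2).totalDegree) :=
      Nat.le_max_right _ _
    intro i
    fin_cases i
    · show (A 0).totalDegree < N₂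
      omega
    · show (A 1).totalDegree < N₂
      omega
    · show (A 2).totalDegree < N₂
      omega
  obtain ⟨hg0, hg1, hg2⟩ := grad_MM A N₂ hN₂ h01 h02 h12
  set φu : P3 := MM N₂ (A 0 * X 0 + A 1 * X 1 + A 2 * X 2) with hφudef
  have hφudeg : φu.totalDegree ≤ k := by
    refine (td_MM_le _ _).trans ?_
    have hs2 : A 0 * X 0 + A 1 * X 1 + A 2 * X 2
        = (aP₁ 0 - aP₂ 0) * X 0 + (aP₁ 1 - aP₂ 1) * X 1 + (aP₁ 2 - aP₂ 2) * X 2 := by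
      show ((aP₁ 0 + (X 1 * bP₁ 2 - X 2 * bP₁ 1)) - (aP₂ 0 + (X 1 * bP₂ 2 - X 2 * bP₂ 1))) * X 0
          + ((aP₁ 1 + (X 2 * bP₁ 0 - X 0 * bP₁ 2)) - (aP₂ 1 + (X 2 * bP₂ 0 - X 0 * bP₂ 2))) * X 1
          + ((aP₁ 2 + (X 0 * bP₁ 1 - X 1 * bP₁ 0)) - (aP₂ 2 + (X 0 * bP₂ 1 - X 1 * bP₂ 0))) * X 2
          = _
      ring
    rw [hs2]
    have hb : ∀ l : Fin 3, ((aP₁ l - aP₂ l) * X l).totalDegree ≤ k := by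
      intro l
      refine (totalDegree_mul _ _).trans ?_
      rw [totalDegree_X]
      have hd := (totalDegree_sub (aP₁ l) (aP₂ l)).trans (max_le (haP₁ l) (haP₂ l))
      omega
    exact (totalDegree_add _ _).trans (max_le
      ((totalDegree_add _ _).trans (max_le (hb 0) (hb 1))) (hb 2))
  -- use the orthogonality conditions
  have hI : ∀ (Hf : (Fin 3 → ℝ) → (Fin 3 → ℝ)) (Pf : Fin 3 → P3),
      (∀ x i, Hf x i = eval x (Pf i)) →
      (∫ x in refTet, dot3 (Hf x) (grad3 (fun y => eval y φu) x))
        = I2 Pf (fun i => pderiv i φu) := by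
    intro Hf Pf hHf
    unfold I2
    congr 1
    funext x
    unfold dot3
    refine Finset.sum_congr rfl fun i _ => ?_
    rw [hHf x i]
    congr 1
    exact pd3_eval φu i x
  have hzero : I2 A (fun i => pderiv i φu) = 0 := by
    rw [hAdef, I2_sub_left, ← hI H₁ P₁ hH₁, ← hI H₂ P₂ hH₂, ho₁ φu hφudeg, ho₂ φu hφudeg,
      sub_zero]
  have hgv : (fun i => pderiv i φu) = A := by
    funext i
    fin_cases i
    · exact hg0
    · exact hg1
    · exact hg2
  rw [hgv] at hzero
  have hAzero := I2_self_zero hzero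
  funext x
  funext i
  rw [hH₁ x i, hH₂ x i]
  have hPP : P₁ i = P₂ i := by
    have hz := hAzero i
    have : P₁ i - P₂ i = 0 := hz
    exact sub_eq_zero.mp this
  rw [hPP]

end Uniqueness

set_option maxHeartbeats 2000000 in
open MvPolynomial in
theorem local_element_equilibration_wellposed (k : ℕ) (hk : 1 ≤ k)
    (u : (Fin 3 → ℝ) → (Fin 3 → ℝ)) (hu : IsRT k u)
    (hdiv : ∀ x, div3 u x = 0) :
    ∃! H : (Fin 3 → ℝ) → (Fin 3 → ℝ),
      IsNedelec k H ∧ (∀ x, curl3 H x = u x) ∧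
      ∀ ψ : MvPolynomial (Fin 3) ℝ, ψ.totalDegree ≤ k →
        ∫ x in refTet, dot3 (H x) (grad3 (fun y => MvPolynomial.eval y ψ) x) = 0 := by
  classical
  obtain ⟨v, w, hv, hw, huvw⟩ := hu
  choose vp hvpd hvpe using hv
  obtain ⟨wp, hwpd, hwpe⟩ := hw
  have hvpe' : ∀ i x, v x i = eval x (vp i) := fun i x => hvpe i x
  set q : Fin 3 → P3 := fun i => vp i + wp * X i with hqdef
  have hq : ∀ x i, u x i = eval x (q i) := by
    intro x i
    rw [huvw x]
    show v x i + w x * x i = eval x (vp i + wp * X i)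
    rw [map_add, map_mul, eval_X, hvpe' i x, hwpe x]
  have hqe : ∀ i, (fun y => u y i) = fun y => eval y (q i) := fun i => funext fun y => hq y i
  have hdivq : pderiv 0 (q 0) + pderiv 1 (q 1) + pderiv 2 (q 2) = 0 := by
    apply MvPolynomial.funext
    intro x
    rw [map_add, map_add, map_zero]
    have hd := hdiv x
    unfold div3 at hd
    rw [Fin.sum_univ_three, hqe 0, hqe 1, hqe 2, pd3_eval, pd3_eval, pd3_eval] at hd
    exact hd
  set N₀ : ℕ := Nat.max (Nat.max ((q 0).totalDegree) ((q 1).totalDegree)) ((q 2).totalDegree)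
    with hN₀def
  have hN : ∀ i, (q i).totalDegree < N₀ + 1 := by
    have hm1 : (q 0).totalDegree ≤ Nat.max ((q 0).totalDegree) ((q 1).totalDegree) :=
      Nat.le_max_left _ _
    have hm2 : (q 1).totalDegree ≤ Nat.max ((q 0).totalDegree) ((q 1).totalDegree) :=
      Nat.le_max_right _ _
    have hm3 : Nat.max ((q 0).totalDegree) ((q 1).totalDegree) ≤ N₀ := Nat.le_max_left _ _
    have hm4 : (q 2).totalDegree ≤ N₀ := Nat.le_max_right _ _
    intro i
    fin_cases i
    · show (q 0).totalDegree < N₀ + 1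
      omega
    · show (q 1).totalDegree < N₀ + 1
      omega
    · show (q 2).totalDegree < N₀ + 1
      omega
  obtain ⟨hcK0, hcK1, hcK2⟩ := curl_KK q (N₀ + 1) hN hdivq
  set H0p : Fin 3 → P3 := ![-(X 1 * KK (N₀+1) (q 2) - X 2 * KK (N₀+1) (q 1)),
    -(X 2 * KK (N₀+1) (q 0) - X 0 * KK (N₀+1) (q 2)),
    -(X 0 * KK (N₀+1) (q 1) - X 1 * KK (N₀+1) (q 0))] with hH0pdef
  set gs := ((BF k).toDual (BF_nondeg k)).symm (LF k H0p) with hgsdef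
  have hBL : ∀ h, BF k gs h = LF k H0p h := fun h =>
    LinearMap.BilinForm.apply_toDual_symm_apply (LF k H0p) h
  obtain ⟨φv, hφv⟩ := LinearMap.mem_range.mp gs.2
  set φp : P3 := (φv : P3) with hφpdef
  have hφpdeg : φp.totalDegree ≤ k := (mem_restrictTotalDegree _ _ _).mp φv.2
  have hgsc : ∀ i, (gs : Fin 3 → P3) i = pderiv i φp := by
    intro i
    rw [← hφv]
    rfl
  set Pp : Fin 3 → P3 := fun i => H0p i - pderiv i φp with hPpdef
  set H : (Fin 3 → ℝ) → (Fin 3 → ℝ) := fun x i => eval x (Pp i) with hHdef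
  -- Nédélec decomposition
  set WW : P3 := ∑ m ∈ Finset.range N₀, C (((m + 1 : ℕ) : ℝ) + 2)⁻¹ * homogeneousComponent m wp
    with hWWdef
  have hdecomp : ∀ i : Fin 3, KK (N₀+1) (q i) = KK (N₀+1) (vp i) + WW * X i := by
    intro i
    have h1 : q i = vp i + wp * X i := rfl
    rw [h1, KK_add]
    congr 1
    exact KK_mul_X N₀ wp i
  have hned : ∀ x, H x = (fun i => eval x (-(pderiv i φp)))
      + cross3 x (fun i => eval x (-(KK (N₀+1) (vp i)))) := by
    intro x
    funext i
    show eval x (Pp i) = _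
    fin_cases i
    · show eval x (H0p 0 - pderiv 0 φp)
        = eval x (-(pderiv 0 φp)) + (x 1 * eval x (-(KK (N₀+1) (vp 2)))
          - x 2 * eval x (-(KK (N₀+1) (vp 1))))
      rw [show H0p 0 = -(X 1 * KK (N₀+1) (q 2) - X 2 * KK (N₀+1) (q 1)) from rfl,
        hdecomp 2, hdecomp 1]
      simp only [map_sub, map_neg, map_mul, map_add, eval_X]
      ring
    · show eval x (H0p 1 - pderiv 1 φp)
        = eval x (-(pderiv 1 φp)) + (x 2 * eval x (-(KK (N₀+1) (vp 0)))
          - x 0 * eval x (-(KK (N₀+1) (vp 2))))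
      rw [show H0p 1 = -(X 2 * KK (N₀+1) (q 0) - X 0 * KK (N₀+1) (q 2)) from rfl,
        hdecomp 0, hdecomp 2]
      simp only [map_sub, map_neg, map_mul, map_add, eval_X]
      ring
    · show eval x (H0p 2 - pderiv 2 φp)
        = eval x (-(pderiv 2 φp)) + (x 0 * eval x (-(KK (N₀+1) (vp 1)))
          - x 1 * eval x (-(KK (N₀+1) (vp 0))))
      rw [show H0p 2 = -(X 0 * KK (N₀+1) (q 1) - X 1 * KK (N₀+1) (q 0)) from rfl,
        hdecomp 1, hdecomp 0]
      simp only [map_sub, map_neg, map_mul, map_add, eval_X]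
      ring
  have hnedH : IsNedelec k H := by
    refine ⟨fun x i => eval x (-(pderiv i φp)), fun x i => eval x (-(KK (N₀+1) (vp i))),
      ?_, ?_, hned⟩
    · intro i
      refine ⟨-(pderiv i φp), ?_, fun x => rfl⟩
      rw [totalDegree_neg]
      exact td_pderiv_le i φp hφpdeg
    · intro i
      refine ⟨-(KK (N₀+1) (vp i)), ?_, fun x => rfl⟩
      rw [totalDegree_neg]
      exact (td_KK_le _ _).trans (hvpd i)
  have hcomp : ∀ l : Fin 3, (fun y => H y l) = fun y => eval y (Pp l) := fun l => rfl
  have hcurl : ∀ x, curl3 H x = u x := by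
    intro x
    funext j
    fin_cases j
    · show pd3 (fun y => H y 2) 1 x - pd3 (fun y => H y 1) 2 x = u x 0
      rw [hcomp 2, hcomp 1, pd3_eval, pd3_eval, hq x 0, ← map_sub]
      congr 1
      rw [show Pp 2 = H0p 2 - pderiv 2 φp from rfl, show Pp 1 = H0p 1 - pderiv 1 φp from rfl,
        map_sub, map_sub,
        show H0p 2 = -(X 0 * KK (N₀+1) (q 1) - X 1 * KK (N₀+1) (q 0)) from rfl,
        show H0p 1 = -(X 2 * KK (N₀+1) (q 0) - X 0 * KK (N₀+1) (q 2)) from rfl]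
      linear_combination hcK0 - pderiv_pderiv_comm 1 2 φp
    · show pd3 (fun y => H y 0) 2 x - pd3 (fun y => H y 2) 0 x = u x 1
      rw [hcomp 0, hcomp 2, pd3_eval, pd3_eval, hq x 1, ← map_sub]
      congr 1
      rw [show Pp 0 = H0p 0 - pderiv 0 φp from rfl, show Pp 2 = H0p 2 - pderiv 2 φp from rfl,
        map_sub, map_sub,
        show H0p 0 = -(X 1 * KK (N₀+1) (q 2) - X 2 * KK (N₀+1) (q 1)) from rfl,
        show H0p 2 = -(X 0 * KK (N₀+1) (q 1) - X 1 * KK (N₀+1) (q 0)) from rfl]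
      linear_combination hcK1 - pderiv_pderiv_comm 2 0 φp
    · show pd3 (fun y => H y 1) 0 x - pd3 (fun y => H y 0) 1 x = u x 2
      rw [hcomp 1, hcomp 0, pd3_eval, pd3_eval, hq x 2, ← map_sub]
      congr 1
      rw [show Pp 1 = H0p 1 - pderiv 1 φp from rfl, show Pp 0 = H0p 0 - pderiv 0 φp from rfl,
        map_sub, map_sub,
        show H0p 1 = -(X 2 * KK (N₀+1) (q 0) - X 0 * KK (N₀+1) (q 2)) from rfl,
        show H0p 0 = -(X 1 * KK (N₀+1) (q 2) - X 2 * KK (N₀+1) (q 1)) from rfl]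
      linear_combination hcK2 - pderiv_pderiv_comm 0 1 φp
  have horth : ∀ ψ : MvPolynomial (Fin 3) ℝ, ψ.totalDegree ≤ k →
      (∫ x in refTet, dot3 (H x) (grad3 (fun y => MvPolynomial.eval y ψ) x)) = 0 := by
    intro ψ hψ
    set ψv : restrictTotalDegree (Fin 3) ℝ k := ⟨ψ, (mem_restrictTotalDegree _ _ _).mpr hψ⟩
      with hψvdef
    set gψ : ↥(LinearMap.range (gradMap k)) := ⟨gradMap k ψv, LinearMap.mem_range_self _ _⟩
      with hgψdef
    have hgψc : (gψ : Fin 3 → P3) = fun i => pderiv i ψ := rfl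
    have hint_eq : (∫ x in refTet, dot3 (H x) (grad3 (fun y => MvPolynomial.eval y ψ) x))
        = I2 Pp (fun i => pderiv i ψ) := by
      unfold I2
      congr 1
      funext x
      unfold dot3
      refine Finset.sum_congr rfl fun i _ => ?_
      show eval x (Pp i) * _ = _
      congr 1
      exact pd3_eval ψ i x
    rw [hint_eq]
    have hPps : Pp = H0p - (gs : Fin 3 → P3) := by
      funext i
      show H0p i - pderiv i φp = H0p i - (gs : Fin 3 → P3) i
      rw [hgsc i]
    rw [hPps, I2_sub_left, ← hgψc]
    have h2 : I2 (gs : Fin 3 → P3) (gψ : Fin 3 → P3) = I2 H0p (gψ : Fin 3 → P3) := by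
      rw [← BF_apply k gs gψ, hBL gψ]
      rfl
    rw [h2, sub_self]
  refine ⟨H, ⟨hnedH, hcurl, horth⟩, ?_⟩
  intro H' hH'
  exact uniqueness_aux k hk H' H hH'.1 hnedH
    (fun x => by rw [hH'.2.1 x, hcurl x]) hH'.2.2 horth
end
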